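/- Let f(x) = Σ_{j=1}^n f_j(x_j) with each f_j : ℝ → ℝ convex. If x̄, x* ∈ S with f(x*) < f(x̄) and x* − x̄ = Σ_{i=1}^r λ_i g_i is a sign-compatible decomposition (λ_i ∈ ℤ_{>0}, g_i ⊑ x* − x̄, g_i ∈ Ker_ℤ(A)), then there exists an index i such that f(x̄ + λ_i g_i) < f(x̄) and x̄ + λ_i g_i ∈ S. -/

import Mathlib

lemma convex_seg (f : ℝ → ℝ) (hf : ConvexOn ℝ Set.univ f) (p d t : ℝ)
    (ht0 : 0 ≤ t) (ht1 : t ≤ 1) :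
    f (p + t * d) - f p ≤ t * (f (p + d) - f p) := by
  have h := hf.2 (Set.mem_univ p) (Set.mem_univ (p + d))
    (by linarith : (0:ℝ) ≤ 1 - t) ht0 (by ring)
  have he : (1 - t) • p + t • (p + d) = p + t * d := by
    simp [smul_eq_mul]; ring
  rw [he] at h
  simp only [smul_eq_mul] at h
  nlinarith [h]

lemma int_between (r : ℕ) (d : ℤ) (s : Fin r → ℤ)
    (hsum : d = ∑ i, s i) (hsign : ∀ i, 0 ≤ s i * d)
    (hz : d = 0 → ∀ i, s i = 0) :
    ∀ i, min 0 d ≤ s i ∧ s i ≤ max 0 d := by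
  intro i
  rcases lt_trichotomy d 0 with hd | hd | hd
  · have hle : ∀ k, s k ≤ 0 := fun k => by nlinarith [hsign k]
    have hds : d ≤ s i := by
      have h : -s i ≤ ∑ k, -s k :=
        Finset.single_le_sum (f := fun k => -s k)
          (fun k _ => by simpa using hle k) (Finset.mem_univ i)
      have h2 : ∑ k, -s k = -∑ k, s k := by simp
      rw [h2] at h
      omega
    have := hle i
    omega
  · have := hz hd i
    omega
  · have hge : ∀ k, 0 ≤ s k := fun k => by nlinarith [hsign k]
    have hds : s i ≤ d := by
      rw [hsum]
      exact Finset.single_le_sum (fun k _ => hge k) (Finset.mem_univ i)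
    have := hge i
    omega

/-- For a separable convex objective, a sign-compatible decomposition of
`x* - x̄` with `f(x*) < f(x̄)` yields an augmenting step: some `x̄ + λᵢ gᵢ ∈ S`
with smaller objective value. -/
theorem exists_augmenting_step (m n : ℕ) (A : Matrix (Fin m) (Fin n) ℤ)
    (b : Fin m → ℤ) (l u : Fin n → ℤ)
    (f : Fin n → ℝ → ℝ) (hf : ∀ j, ConvexOn ℝ Set.univ (f j))
    (F : (Fin n → ℤ) → ℝ) (hF : ∀ x, F x = ∑ j, f j (x j : ℝ))
    (xbar xstar : Fin n → ℤ)
    (hxbar : A.mulVec xbar = b ∧ ∀ i, l i ≤ xbar i ∧ xbar i ≤ u i)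
    (hxstar : A.mulVec xstar = b ∧ ∀ i, l i ≤ xstar i ∧ xstar i ≤ u i)
    (hlt : F xstar < F xbar)
    (r : ℕ) (lam : Fin r → ℤ) (hlam : ∀ i, 0 < lam i)
    (gs : Fin r → (Fin n → ℤ))
    (hker : ∀ i, A.mulVec (gs i) = 0)
    (hsq : ∀ i, ∀ j, 0 ≤ gs i j * (xstar - xbar) j ∧
      |gs i j| ≤ |(xstar - xbar) j|)
    (hdec : xstar - xbar = ∑ i, lam i • gs i) :
    ∃ i : Fin r, F (xbar + lam i • gs i) < F xbar ∧
      A.mulVec (xbar + lam i • gs i) = b ∧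
      ∀ j, l j ≤ (xbar + lam i • gs i) j ∧ (xbar + lam i • gs i) j ≤ u j := by
  -- coordinatewise decomposition
  set s : Fin r → Fin n → ℤ := fun i j => lam i * gs i j with hs
  have hdecj : ∀ j, xstar j - xbar j = ∑ i, s i j := by
    intro j
    have := congrFun hdec j
    simpa [Finset.sum_apply, hs] using this
  have hsignj : ∀ i j, 0 ≤ s i j * (xstar j - xbar j) := by
    intro i j
    have h := (hsq i j).1
    simp only [Pi.sub_apply] at h
    show 0 ≤ lam i * gs i j * (xstar j - xbar j)
    rw [mul_assoc]
    exact mul_nonneg (hlam i).le h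
  have hzj : ∀ j, xstar j - xbar j = 0 → ∀ i, s i j = 0 := by
    intro j hj i
    have h := (hsq i j).2
    simp only [Pi.sub_apply] at h
    rw [hj] at h
    simp only [abs_zero] at h
    have : gs i j = 0 := abs_nonpos_iff.mp h
    simp [hs, this]
  have hbet : ∀ i j, min 0 (xstar j - xbar j) ≤ s i j ∧
      s i j ≤ max 0 (xstar j - xbar j) := by
    intro i j
    exact int_between r _ (fun i => s i j) (hdecj j) (fun i => hsignj i j)
      (hzj j) i
  -- key convexity estimate per coordinate
  have hkey : ∀ j, ∑ i, (f j ((xbar j + s i j : ℤ) : ℝ) - f j (xbar j : ℝ)) ≤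
      f j (xstar j : ℝ) - f j (xbar j : ℝ) := by
    intro j
    by_cases hd : xstar j - xbar j = 0
    · have h1 : ∀ i, s i j = 0 := hzj j hd
      have h2 : (xstar j : ℝ) = (xbar j : ℝ) := by
        have h3 : xstar j = xbar j := by omega
        exact_mod_cast h3
      simp [h1, h2]
    · set d : ℝ := ((xstar j - xbar j : ℤ) : ℝ) with hdd
      have hdne : d ≠ 0 := by
        rw [hdd]; exact_mod_cast hd
      set t : Fin r → ℝ := fun i => ((s i j : ℤ) : ℝ) / d with ht
      have hts : ∑ i, t i = 1 := by
        rw [ht]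
        rw [← Finset.sum_div]
        rw [div_eq_one_iff_eq hdne]
        rw [hdd]
        exact_mod_cast (hdecj j).symm
      have ht0 : ∀ i, 0 ≤ t i := by
        intro i
        have hsd : (0:ℝ) ≤ (s i j : ℝ) * d := by
          rw [hdd]; exact_mod_cast hsignj i j
        have he : t i = ((s i j : ℝ) * d) / (d * d) := by
          rw [ht]; rw [mul_div_mul_right _ _ hdne]
        rw [he]
        exact div_nonneg hsd (mul_self_nonneg d)
      have ht1 : ∀ i, t i ≤ 1 := by
        intro i
        rw [← hts]
        exact Finset.single_le_sum (fun k _ => ht0 k) (Finset.mem_univ i)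
      have : ∀ i, f j ((xbar j + s i j : ℤ) : ℝ) - f j (xbar j : ℝ) ≤
          t i * (f j (xstar j : ℝ) - f j (xbar j : ℝ)) := by
        intro i
        have hc := convex_seg (f j) (hf j) (xbar j : ℝ) d (t i) (ht0 i) (ht1 i)
        have e1 : (xbar j : ℝ) + t i * d = ((xbar j + s i j : ℤ) : ℝ) := by
          rw [ht]
          field_simp
          exact (Int.cast_add _ _).symm
        have e2 : (xbar j : ℝ) + d = (xstar j : ℝ) := by
          rw [hdd]; push_cast; ring
        rw [e1, e2] at hc
        exact hc
      calc ∑ i, (f j ((xbar j + s i j : ℤ) : ℝ) - f j (xbar j : ℝ))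
          ≤ ∑ i, t i * (f j (xstar j : ℝ) - f j (xbar j : ℝ)) :=
            Finset.sum_le_sum (fun i _ => this i)
        _ = (∑ i, t i) * (f j (xstar j : ℝ) - f j (xbar j : ℝ)) := by
            rw [Finset.sum_mul]
        _ = f j (xstar j : ℝ) - f j (xbar j : ℝ) := by rw [hts]; ring
  -- sum over coordinates and swap
  have hsum : ∑ i, (F (xbar + lam i • gs i) - F xbar) ≤ F xstar - F xbar := by
    have e : ∀ i, F (xbar + lam i • gs i) - F xbar =
        ∑ j, (f j ((xbar j + s i j : ℤ) : ℝ) - f j (xbar j : ℝ)) := by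
      intro i
      rw [hF, hF, ← Finset.sum_sub_distrib]
      refine Finset.sum_congr rfl fun j _ => ?_
      simp [hs, Pi.add_apply, Pi.smul_apply, smul_eq_mul]
    calc ∑ i, (F (xbar + lam i • gs i) - F xbar)
        = ∑ i, ∑ j, (f j ((xbar j + s i j : ℤ) : ℝ) - f j (xbar j : ℝ)) := by
          exact Finset.sum_congr rfl (fun i _ => e i)
      _ = ∑ j, ∑ i, (f j ((xbar j + s i j : ℤ) : ℝ) - f j (xbar j : ℝ)) :=
          Finset.sum_comm
      _ ≤ ∑ j, (f j (xstar j : ℝ) - f j (xbar j : ℝ)) :=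
          Finset.sum_le_sum (fun j _ => hkey j)
      _ = F xstar - F xbar := by rw [hF, hF, ← Finset.sum_sub_distrib]
  have hlt' : ∑ i, (F (xbar + lam i • gs i) - F xbar) < ∑ i : Fin r, (0:ℝ) := by
    simp only [Finset.sum_const, smul_zero]
    calc _ ≤ F xstar - F xbar := hsum
      _ < 0 := by linarith
  obtain ⟨i, -, hi⟩ := Finset.exists_lt_of_sum_lt hlt'
  refine ⟨i, by linarith, ?_, ?_⟩
  · rw [Matrix.mulVec_add, hxbar.1, Matrix.mulVec_smul, hker i]
    simp
  · intro j
    have hb := hbet i j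
    have h1 := hxbar.2 j
    have h2 := hxstar.2 j
    have : (xbar + lam i • gs i) j = xbar j + s i j := by
      simp [hs, Pi.add_apply, Pi.smul_apply, smul_eq_mul]
    rw [this]
    rcases le_or_gt 0 (xstar j - xbar j) with h | h
    · constructor <;> omega
    · constructor <;> omega
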